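/- Let Δ be an irreducible root system, α a simple root, d = d_α = ht_α(θ), C = (c_{αβ}) the inverse Cartan matrix. Then for every k ≥ 1: ht_α(|Δ_α(k)|) = k · #Δ_α(k) = c_{αα} · q_α(k). Consequently, (d − i)·#Δ_α(d−i) = i·#Δ_α(i) for 1 ≤ i ≤ d−1; in particular #Δ_α(d−1) = #Δ_α(1)/(d−1). -/

import Mathlib

open scoped RealInnerProductSpace
open scoped Classical

/-- An (irreducible, reduced, crystallographic) root system in a real inner product
space `V`, together with a choice of base (simple roots), coordinate functions with
respect to the base, and fundamental weights. -/
structure RootSystemData (V : Type*) [NormedAddCommGroup V] [InnerProductSpace ℝ V] where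
  Δ : Finset V
  base : Finset V
  base_sub : base ⊆ Δ
  root_ne_zero : ∀ γ ∈ Δ, γ ≠ 0
  span_eq_top : Submodule.span ℝ (Δ : Set V) = ⊤
  reflect_mem : ∀ γ ∈ Δ, ∀ δ ∈ Δ, δ - (2 * ⟪δ, γ⟫ / ⟪γ, γ⟫) • γ ∈ Δ
  crystallographic : ∀ γ ∈ Δ, ∀ δ ∈ Δ, ∃ k : ℤ, 2 * ⟪δ, γ⟫ / ⟪γ, γ⟫ = (k : ℝ)
  reduced : ∀ γ ∈ Δ, (2 : ℝ) • γ ∉ Δ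
  coord : V → V → ℝ
  coord_add : ∀ α x y, coord (x + y) α = coord x α + coord y α
  coord_smul : ∀ α (c : ℝ) (x : V), coord (c • x) α = c * coord x α
  coord_base : ∀ α ∈ base, ∀ β ∈ base, coord β α = if β = α then 1 else 0
  root_decomp : ∀ γ ∈ Δ, γ = ∑ α ∈ base, coord γ α • α
  pos_or_neg : ∀ γ ∈ Δ, (∀ α ∈ base, 0 ≤ coord γ α) ∨ (∀ α ∈ base, coord γ α ≤ 0)
  coord_int : ∀ γ ∈ Δ, ∀ α ∈ base, ∃ k : ℤ, coord γ α = (k : ℝ)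
  irreducible : ∀ S ⊆ Δ, S.Nonempty →
    (∀ γ ∈ S, ∀ δ ∈ Δ, δ ∉ S → ⟪γ, δ⟫ = 0) → S = Δ
  fw : V → V
  fw_spec : ∀ α ∈ base, ∀ β ∈ base, ⟪fw α, β⟫ = if β = α then ⟪α, α⟫ / 2 else 0

namespace RootSystemData

variable {V : Type*} [NormedAddCommGroup V] [InnerProductSpace ℝ V]

/-- The set of positive roots (nonnegative coordinates w.r.t. the base). -/
noncomputable def posRoots (R : RootSystemData V) : Finset V :=
  R.Δ.filter fun γ => ∀ α ∈ R.base, 0 ≤ R.coord γ α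

/-- The height of a root: the sum of its coordinates in the base. -/
noncomputable def ht (R : RootSystemData V) (γ : V) : ℝ :=
  ∑ α ∈ R.base, R.coord γ α

/-- The height of the coroot `γ^∨` in the dual root system. -/
noncomputable def dualHt (R : RootSystemData V) (γ : V) : ℝ :=
  ∑ α ∈ R.base, R.coord γ α * ⟪α, α⟫ / ⟪γ, γ⟫

/-- `R_α`: the set of roots having positive inner product with the fundamental
weight `ϖ_α`. -/
noncomputable def Rset (R : RootSystemData V) (α : V) : Finset V :=
  R.Δ.filter fun γ => 0 < ⟪γ, R.fw α⟫

/-- `Δ_α(i)`: the set of roots whose coefficient of `α` equals `i`. -/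
noncomputable def level (R : RootSystemData V) (α : V) (i : ℤ) : Finset V :=
  R.Δ.filter fun γ => R.coord γ α = (i : ℝ)

end RootSystemData


namespace RootSystemData

variable {V : Type*} [NormedAddCommGroup V] [InnerProductSpace ℝ V] (R : RootSystemData V)

lemma coord_zero (α : V) : R.coord 0 α = 0 := by
  have h := R.coord_smul α 0 0
  simpa using h

lemma coord_neg' (α x : V) : R.coord (-x) α = - R.coord x α := by
  have h := R.coord_smul α (-1) x
  simpa using h

lemma coord_sub' (α x y : V) : R.coord (x - y) α = R.coord x α - R.coord y α := by
  rw [sub_eq_add_neg, R.coord_add, R.coord_neg']; ring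

lemma coord_sum' {ι : Type*} (s : Finset ι) (f : ι → V) (α : V) :
    R.coord (∑ γ ∈ s, f γ) α = ∑ γ ∈ s, R.coord (f γ) α := by
  classical
  induction s using Finset.induction with
  | empty => simp [R.coord_zero]
  | insert a s h ih => rw [Finset.sum_insert h, Finset.sum_insert h, R.coord_add, ih]

lemma neg_mem' {γ : V} (hγ : γ ∈ R.Δ) : -γ ∈ R.Δ := by
  have hne : ⟪γ, γ⟫ ≠ 0 := by
    simpa using (inner_self_ne_zero (𝕜 := ℝ)).mpr (R.root_ne_zero γ hγ)
  have h := R.reflect_mem γ hγ γ hγ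
  have he : γ - (2 * ⟪γ, γ⟫ / ⟪γ, γ⟫) • γ = -γ := by
    rw [mul_div_assoc, div_self hne, mul_one]
    module
  rwa [he] at h

end RootSystemData

/-- With `c_{αα} = coord_α(ϖ_α)` the diagonal entry of the inverse
Cartan matrix: for every `k ≥ 1`,
`ht_α(|Δ_α(k)|) = k·#Δ_α(k) = c_{αα}·q_α(k)`; consequently
`(d−i)·#Δ_α(d−i) = i·#Δ_α(i)` for `1 ≤ i ≤ d−1`, and in particular
`#Δ_α(d−1) = #Δ_α(1)/(d−1)`. -/
theorem coord_sum_level_eq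
    {V : Type*} [NormedAddCommGroup V] [InnerProductSpace ℝ V]
    (R : RootSystemData V) (α : V) (hα : α ∈ R.base)
    (θ : V) (hθ : θ ∈ R.Δ)
    (hθmax : ∀ γ ∈ R.Δ, ∀ β ∈ R.base, R.coord γ β ≤ R.coord θ β)
    (d : ℕ) (hd : (d : ℝ) = R.coord θ α)
    (qfun : ℕ → ℝ)
    (hqfun : ∀ i : ℕ, (∑ γ ∈ R.level α (i : ℤ), γ) = qfun i • R.fw α) :
    (∀ k : ℕ, 1 ≤ k →
      R.coord (∑ γ ∈ R.level α (k : ℤ), γ) α = (k : ℝ) * ((R.level α (k : ℤ)).card : ℝ) ∧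
      (k : ℝ) * ((R.level α (k : ℤ)).card : ℝ) = R.coord (R.fw α) α * qfun k) ∧
    (∀ i : ℕ, 1 ≤ i → i ≤ d - 1 →
      ((d : ℝ) - (i : ℝ)) * ((R.level α ((d : ℤ) - (i : ℤ))).card : ℝ)
        = (i : ℝ) * ((R.level α (i : ℤ)).card : ℝ)) ∧
    (2 ≤ d →
      ((d : ℝ) - 1) * ((R.level α ((d : ℤ) - 1)).card : ℝ)
        = ((R.level α 1).card : ℝ)) := by
  have hαΔ : α ∈ R.Δ := R.base_sub hα
  have hαne : α ≠ 0 := R.root_ne_zero α hαΔ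
  have hαα : ⟪α, α⟫ ≠ 0 := by
    simpa using (inner_self_ne_zero (𝕜 := ℝ)).mpr hαne
  have hθne : θ ≠ 0 := R.root_ne_zero θ hθ
  have hθθ : ⟪θ, θ⟫ ≠ 0 := by
    simpa using (inner_self_ne_zero (𝕜 := ℝ)).mpr hθne
  -- Part 1
  have part1 : ∀ k : ℕ, 1 ≤ k →
      R.coord (∑ γ ∈ R.level α (k : ℤ), γ) α = (k : ℝ) * ((R.level α (k : ℤ)).card : ℝ) ∧
      (k : ℝ) * ((R.level α (k : ℤ)).card : ℝ) = R.coord (R.fw α) α * qfun k := by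
    intro k hk
    have h1 : R.coord (∑ γ ∈ R.level α (k : ℤ), γ) α
        = (k : ℝ) * ((R.level α (k : ℤ)).card : ℝ) := by
      rw [R.coord_sum']
      rw [Finset.sum_congr rfl (fun γ hγ => by
        have := (Finset.mem_filter.mp hγ).2
        push_cast at this
        exact this)]
      rw [Finset.sum_const, nsmul_eq_mul, mul_comm]
    refine ⟨h1, ?_⟩
    have h2 := hqfun k
    have h3 : R.coord (∑ γ ∈ R.level α (k : ℤ), γ) α = qfun k * R.coord (R.fw α) α := by
      rw [h2, R.coord_smul]
    rw [h1] at h3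
    rw [h3, mul_comm]
  -- the symmetry q(i) = q(d - i)
  have key : ∀ i : ℕ, 1 ≤ i → i ≤ d - 1 → qfun i = qfun (d - i) := by
    intro i hi1 hid
    have hd2 : 2 ≤ d := by omega
    have hidlt : i < d := by omega
    set sθ : V → V := fun x => x - (2 * ⟪x, θ⟫ / ⟪θ, θ⟫) • θ with hsθ
    have hinv : ∀ x : V, sθ (sθ x) = x := by
      intro x
      have h1 : ⟪x - (2 * ⟪x, θ⟫ / ⟪θ, θ⟫) • θ, θ⟫ = -⟪x, θ⟫ := by
        rw [inner_sub_left, real_inner_smul_left]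
        field_simp
        ring
      simp only [hsθ, h1]
      have h2 : 2 * -⟪x, θ⟫ / ⟪θ, θ⟫ = -(2 * ⟪x, θ⟫ / ⟪θ, θ⟫) := by ring
      rw [h2, neg_smul, sub_neg_eq_add, sub_add_cancel]
    have hinj : Function.Injective sθ := fun a b h => by
      rw [← hinv a, h, hinv]
    have hbound : ∀ δ ∈ R.Δ, |R.coord δ α| ≤ (d : ℝ) := by
      intro δ hδ
      rw [abs_le]
      constructor
      · have h1 := hθmax (-δ) (R.neg_mem' hδ) α hα
        rw [R.coord_neg'] at h1
        linarith [hd ▸ h1]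
      · have h1 := hθmax δ hδ α hα
        linarith [hd ▸ h1]
    set S : Finset V := R.level α (i : ℤ) ∪ R.level α ((i : ℤ) - d) with hS
    have hmap : ∀ γ ∈ S, sθ γ ∈ S := by
      intro γ hγ
      simp only [hS, Finset.mem_union, RootSystemData.level, Finset.mem_filter] at hγ ⊢
      have hγΔ : γ ∈ R.Δ := by tauto
      obtain ⟨k₀, hk₀⟩ := R.crystallographic θ hθ γ hγΔ
      have hmem : sθ γ ∈ R.Δ := R.reflect_mem θ hθ γ hγΔ
      have hcoord : R.coord (sθ γ) α = R.coord γ α - (k₀ : ℝ) * d := by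
        simp only [hsθ]
        rw [R.coord_sub', R.coord_smul, hk₀, ← hd]
      have hb := hbound _ hmem
      rw [hcoord, abs_le] at hb
      rcases hγ with ⟨_, hcγ⟩ | ⟨_, hcγ⟩
      · rw [hcγ] at hb
        push_cast at hb
        have hk : k₀ = 0 ∨ k₀ = 1 := by
          have h1 : (i : ℤ) - k₀ * d ≤ d := by exact_mod_cast hb.2
          have h2 : -(d : ℤ) ≤ (i : ℤ) - k₀ * d := by exact_mod_cast hb.1
          have hdZ : (2 : ℤ) ≤ d := by exact_mod_cast hd2
          have hiZ1 : (1 : ℤ) ≤ i := by exact_mod_cast hi1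
          have hiZ2 : (i : ℤ) ≤ (d : ℤ) - 1 := by
            have := hidlt; omega
          have hk1 : k₀ ≤ 1 := by
            by_contra hcon
            push_neg at hcon
            have : 2 * (d : ℤ) ≤ k₀ * d :=
              mul_le_mul_of_nonneg_right (by omega) (by omega)
            linarith
          have hk0 : 0 ≤ k₀ := by
            by_contra hcon
            push_neg at hcon
            have : k₀ * d ≤ -1 * d :=
              mul_le_mul_of_nonneg_right (by omega) (by omega)
            linarith
          omega
        rcases hk with h | h
        · left
          refine ⟨hmem, ?_⟩
          rw [hcoord, hcγ, h]
          push_cast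
          ring
        · right
          refine ⟨hmem, ?_⟩
          rw [hcoord, hcγ, h]
          push_cast
          ring
      · rw [hcγ] at hb
        push_cast at hb
        have hk : k₀ = 0 ∨ k₀ = -1 := by
          have h1 : (i : ℤ) - d - k₀ * d ≤ d := by exact_mod_cast hb.2
          have h2 : -(d : ℤ) ≤ (i : ℤ) - d - k₀ * d := by exact_mod_cast hb.1
          have hdZ : (2 : ℤ) ≤ d := by exact_mod_cast hd2
          have hiZ1 : (1 : ℤ) ≤ i := by exact_mod_cast hi1
          have hiZ2 : (i : ℤ) ≤ (d : ℤ) - 1 := by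
            have := hidlt; omega
          have hk1 : k₀ ≤ 0 := by
            by_contra hcon
            push_neg at hcon
            have : 1 * (d : ℤ) ≤ k₀ * d :=
              mul_le_mul_of_nonneg_right (by omega) (by omega)
            linarith
          have hk0 : -1 ≤ k₀ := by
            by_contra hcon
            push_neg at hcon
            have : k₀ * d ≤ -2 * d :=
              mul_le_mul_of_nonneg_right (by omega) (by omega)
            linarith
          omega
        rcases hk with h | h
        · right
          refine ⟨hmem, ?_⟩
          rw [hcoord, hcγ, h]
          push_cast
          ring
        · left
          refine ⟨hmem, ?_⟩
          rw [hcoord, hcγ, h]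
          push_cast
          ring
    have himg : S.image sθ = S := by
      apply Finset.eq_of_subset_of_card_le
      · intro x hx
        obtain ⟨a, ha, rfl⟩ := Finset.mem_image.mp hx
        exact hmap a ha
      · rw [Finset.card_image_of_injective _ hinj]
    have hsum : ∑ γ ∈ S, sθ γ = ∑ γ ∈ S, γ := by
      have h := Finset.sum_image (s := S) (g := sθ) (f := id)
        (fun a _ b _ h => hinj h)
      simpa [himg] using h.symm
    have hzero : ⟪∑ γ ∈ S, γ, θ⟫ = 0 := by
      have h1 : ∑ γ ∈ S, sθ γ
          = (∑ γ ∈ S, γ) - (2 * ⟪∑ γ ∈ S, γ, θ⟫ / ⟪θ, θ⟫) • θ := by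
        simp only [hsθ]
        rw [Finset.sum_sub_distrib]
        congr 1
        rw [← Finset.sum_smul]
        congr 1
        rw [sum_inner, Finset.mul_sum, Finset.sum_div]
      rw [hsum] at h1
      have h2 : (2 * ⟪∑ γ ∈ S, γ, θ⟫ / ⟪θ, θ⟫) • θ = 0 := by
        have := sub_eq_self.mp h1.symm
        exact this
      rcases smul_eq_zero.mp h2 with h3 | h3
      · field_simp [hθθ] at h3
        linarith
      · exact absurd h3 hθne
    have hdisj : Disjoint (R.level α (i : ℤ)) (R.level α ((i : ℤ) - d)) := by
      rw [Finset.disjoint_left]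
      intro γ h1 h2
      have e1 := (Finset.mem_filter.mp h1).2
      have e2 := (Finset.mem_filter.mp h2).2
      rw [e1] at e2
      have : (i : ℤ) = (i : ℤ) - d := by exact_mod_cast e2
      omega
    have hneg : R.level α ((i : ℤ) - d) = (R.level α ((d - i : ℕ) : ℤ)).image Neg.neg := by
      ext γ
      simp only [RootSystemData.level, Finset.mem_image, Finset.mem_filter]
      constructor
      · rintro ⟨hγΔ, hc⟩
        refine ⟨-γ, ⟨R.neg_mem' hγΔ, ?_⟩, by simp⟩
        rw [R.coord_neg', hc]
        push_cast [Nat.cast_sub hidlt.le]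
        ring
      · rintro ⟨a, ⟨haΔ, hc⟩, rfl⟩
        refine ⟨R.neg_mem' haΔ, ?_⟩
        rw [R.coord_neg', hc]
        push_cast [Nat.cast_sub hidlt.le]
        ring
    have hnegsum : ∑ γ ∈ R.level α ((i : ℤ) - d), γ = -(qfun (d - i) • R.fw α) := by
      rw [hneg, Finset.sum_image fun a _ b _ h => neg_injective h, Finset.sum_neg_distrib,
        hqfun (d - i)]
    have hSsum : ∑ γ ∈ S, γ = (qfun i - qfun (d - i)) • R.fw α := by
      rw [hS, Finset.sum_union hdisj, hqfun i, hnegsum, sub_smul]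
      abel
    have hfwθ : ⟪R.fw α, θ⟫ = (d : ℝ) * ⟪α, α⟫ / 2 := by
      conv_lhs => rw [R.root_decomp θ hθ]
      rw [inner_sum]
      rw [Finset.sum_congr rfl fun β hβ => by
        rw [real_inner_smul_right, R.fw_spec α hα β hβ]]
      rw [Finset.sum_congr rfl fun β hβ => (mul_ite _ _ _ _ : _ = ite (β = α) _ _)]
      simp only [mul_zero]
      rw [Finset.sum_ite_eq' R.base α fun β => R.coord θ β * (⟪α, α⟫ / 2)]
      rw [if_pos hα, ← hd]
      ring
    have hfwθne : ⟪R.fw α, θ⟫ ≠ 0 := by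
      rw [hfwθ]
      have hdne : (d : ℝ) ≠ 0 := Nat.cast_ne_zero.mpr (by omega)
      exact div_ne_zero (mul_ne_zero hdne hαα) two_ne_zero
    have h4 : (qfun i - qfun (d - i)) * ⟪R.fw α, θ⟫ = 0 := by
      rw [← real_inner_smul_left, ← hSsum, hzero]
    have h5 := mul_eq_zero.mp h4
    rcases h5 with h5 | h5
    · linarith [h5]
    · exact absurd h5 hfwθne
  have part2 : ∀ i : ℕ, 1 ≤ i → i ≤ d - 1 →
      ((d : ℝ) - (i : ℝ)) * ((R.level α ((d : ℤ) - (i : ℤ))).card : ℝ)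
        = (i : ℝ) * ((R.level α (i : ℤ)).card : ℝ) := by
    intro i hi1 hid
    have hidlt : i < d := by omega
    have hdi1 : 1 ≤ d - i := by omega
    have e1 := (part1 (d - i) hdi1).2
    have e2 := (part1 i hi1).2
    have hcast : ((d - i : ℕ) : ℤ) = (d : ℤ) - (i : ℤ) := by omega
    rw [hcast] at e1
    have hcastR : ((d - i : ℕ) : ℝ) = (d : ℝ) - (i : ℝ) := by
      push_cast [Nat.cast_sub hidlt.le]; ring
    rw [hcastR] at e1
    rw [e1, e2, key i hi1 hid]
  refine ⟨part1, part2, ?_⟩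
  intro hd2
  have h := part2 1 le_rfl (by omega)
  simpa using h
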